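/- arXiv:hep-ph/9306290 — 3 statements merged into one kernel-verified Lean document; each statement's English description precedes it below -/
import Mathlib

section
/- Let M₁ > 0 and M₂ > 0 (with M₁² and M₂² in V₀ the squares of M₁ and M₂). For every real v, the configuration Δ = Δc = (v/M₁)·τ₁, Δbar = Δbarc = −(v/M₂)·τ₁, κ = κ′ = 0 satisfies V₀ = 8·v²·(1 − M′²/(M₁M₂)) (all D-terms vanish along this direction). Consequently, if V₀ is bounded from below over all configurations, then M′² ≤ M₁·M₂. -/
open Matrix

/-- The Pauli matrices `τ₁, τ₂, τ₃`. -/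
noncomputable def pauli : Fin 3 → Matrix (Fin 2) (Fin 2) ℂ :=
  ![!![0, 1; 1, 0], !![0, -Complex.I; Complex.I, 0], !![1, 0; 0, -1]]

/-- The diagonal bidoublet VEV `Φ = diag(κ, κ')`. -/
noncomputable def PhiM (κ κ' : ℂ) : Matrix (Fin 2) (Fin 2) ℂ := !![κ, 0; 0, κ']


lemma tr1 (a b : ℂ) : ((a • pauli 0)ᴴ * (b • pauli 0)).trace = starRingEnd ℂ a * b * 2 := by
  simp [pauli, Matrix.trace_fin_two, Matrix.mul_apply, Fin.sum_univ_succ,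
    Matrix.conjTranspose_apply]; ring

lemma tr2 (a b : ℂ) : ((a • pauli 0) * (b • pauli 0)).trace = a * b * 2 := by
  simp [pauli, Matrix.trace_fin_two, Matrix.mul_apply, Fin.sum_univ_succ]; ring

lemma tr3 (a : ℂ) (m : Fin 3) : ((a • pauli 0)ᴴ * pauli m * (a • pauli 0)).trace = 0 := by
  fin_cases m <;>
    simp [pauli, Matrix.trace_fin_two, Matrix.mul_apply, Fin.sum_univ_succ,
      Matrix.conjTranspose_apply]

lemma phi0 : PhiM 0 0 = 0 := by
  ext i j; fin_cases i <;> fin_cases j <;> simp [PhiM]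

/-- The tree-level Higgs potential of the minimal SUSY left-right model with vanishing
slepton fields, in terms of the triplet fields `Δ, Δbar, Δc, Δbarc` and the diagonal
bidoublet entries `κ, κ'`.  The parameters `M1sq, M2sq, Mpsq (= M′²), Mphisq, musq`
are arbitrary reals and `g, g'` are the gauge couplings. -/
noncomputable def V0 (M1sq M2sq Mpsq Mphisq musq g g' : ℝ)
    (Δ Δbar Δc Δbarc : Matrix (Fin 2) (Fin 2) ℂ) (κ κ' : ℂ) : ℝ :=
  M1sq * ((Δᴴ * Δ).trace + (Δcᴴ * Δc).trace).re
  + M2sq * ((Δbarᴴ * Δbar).trace + (Δbarcᴴ * Δbarc).trace).re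
  + 2 * Mpsq * ((Δ * Δbar).trace + (Δc * Δbarc).trace).re
  + Mphisq * (‖κ‖ ^ 2 + ‖κ'‖ ^ 2)
  + 2 * musq * (κ * κ').re
  + g ^ 2 / 8 * ∑ m : Fin 3,
      ‖(((2 : ℂ) • (Δᴴ * pauli m * Δ) + (2 : ℂ) • (Δbarᴴ * pauli m * Δbar)
        + (PhiM κ κ')ᴴ * pauli m * PhiM κ κ').trace)‖ ^ 2
  + g ^ 2 / 8 * ∑ m : Fin 3,
      ‖(((2 : ℂ) • (Δcᴴ * pauli m * Δc) + (2 : ℂ) • (Δbarcᴴ * pauli m * Δbarc)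
        + PhiM κ κ' * (pauli m)ᵀ * (PhiM κ κ')ᴴ).trace)‖ ^ 2
  + g' ^ 2 / 8 * ‖((2 : ℂ) * ((Δᴴ * Δ).trace - (Δcᴴ * Δc).trace
      - (Δbarᴴ * Δbar).trace + (Δbarcᴴ * Δbarc).trace))‖ ^ 2

/-- Let `M₁ > 0`, `M₂ > 0`.  Along the D-flat direction `Δ = Δc = (v/M₁)τ₁`,
`Δbar = Δbarc = −(v/M₂)τ₁`, `κ = κ' = 0` the potential (with `M₁², M₂²` the squares of
`M₁, M₂`) equals `8v²(1 − M′²/(M₁M₂))`; hence if it is bounded from below then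
`M′² ≤ M₁M₂`. -/
theorem V0_flat_direction_Mp (M1 M2 Mpsq Mphisq musq g g' : ℝ)
    (h1 : 0 < M1) (h2 : 0 < M2) :
    (∀ v : ℝ, V0 (M1 ^ 2) (M2 ^ 2) Mpsq Mphisq musq g g'
        (((v / M1 : ℝ) : ℂ) • pauli 0) ((-(v / M2 : ℝ) : ℂ) • pauli 0)
        (((v / M1 : ℝ) : ℂ) • pauli 0) ((-(v / M2 : ℝ) : ℂ) • pauli 0) 0 0
      = 8 * v ^ 2 * (1 - Mpsq / (M1 * M2))) ∧
    ((∃ C : ℝ, ∀ (Δ Δbar Δc Δbarc : Matrix (Fin 2) (Fin 2) ℂ) (κ κ' : ℂ),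
        C ≤ V0 (M1 ^ 2) (M2 ^ 2) Mpsq Mphisq musq g g' Δ Δbar Δc Δbarc κ κ') →
      Mpsq ≤ M1 * M2) := by
  
  have hval : ∀ v : ℝ, V0 (M1 ^ 2) (M2 ^ 2) Mpsq Mphisq musq g g'
        (((v / M1 : ℝ) : ℂ) • pauli 0) ((-(v / M2 : ℝ) : ℂ) • pauli 0)
        (((v / M1 : ℝ) : ℂ) • pauli 0) ((-(v / M2 : ℝ) : ℂ) • pauli 0) 0 0
      = 8 * v ^ 2 * (1 - Mpsq / (M1 * M2)) := by
    intro v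
    unfold V0
    rw [phi0]
    simp only [tr1, tr2, tr3, Matrix.trace_add, Matrix.trace_smul, smul_zero, add_zero,
      Matrix.zero_mul, Matrix.mul_zero, Matrix.conjTranspose_zero, Matrix.trace_zero,
      zero_add, map_zero, norm_zero, sub_self, mul_zero, Finset.sum_const_zero]
    simp only [Complex.conj_ofReal]
    push_cast
    simp only [Complex.add_re, Complex.mul_re, Complex.ofReal_re, Complex.ofReal_im,
      Complex.neg_re, Complex.neg_im]
    simp [Complex.mul_re, Complex.mul_im, Complex.inv_re, Complex.inv_im, Complex.conj_re, Complex.conj_im, Complex.normSq_ofReal]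
    field_simp
    ring
  refine ⟨hval, ?_⟩
  rintro ⟨C, hC⟩
  by_contra hlt
  push_neg at hlt
  have hM : 0 < M1 * M2 := mul_pos h1 h2
  set k : ℝ := 1 - Mpsq / (M1 * M2) with hk
  have hkneg : k < 0 := by
    have h' : 1 < Mpsq / (M1 * M2) := (one_lt_div hM).2 hlt
    rw [hk]; linarith
  set v : ℝ := Real.sqrt ((|C| + 1) / (8 * (-k))) with hv
  have hnum : 0 ≤ (|C| + 1) / (8 * (-k)) := by
    apply div_nonneg <;> [positivity; linarith]
  have hv2 : v ^ 2 = (|C| + 1) / (8 * (-k)) := Real.sq_sqrt hnum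
  have hle := hC (((v / M1 : ℝ) : ℂ) • pauli 0) ((-(v / M2 : ℝ) : ℂ) • pauli 0)
    (((v / M1 : ℝ) : ℂ) • pauli 0) ((-(v / M2 : ℝ) : ℂ) • pauli 0) 0 0
  rw [hval v] at hle
  have h8 : 8 * v ^ 2 * k = -(|C| + 1) := by
    have hk0 : k ≠ 0 := ne_of_lt hkneg
    rw [hv2]; field_simp
  rw [h8] at hle
  have := abs_nonneg C
  have := neg_abs_le C
  linarith
end

section
/- For every real κ, the configuration with all triplets zero, κ′ = −κ satisfies V₀ = 2·(M_φ² − μ²)·κ², and the configuration with all triplets zero, κ′ = κ satisfies V₀ = 2·(M_φ² + μ²)·κ² (all D-terms vanish along both directions). Consequently, if V₀ is bounded from below over all configurations, then M_φ² ≥ 0 and |μ²| ≤ M_φ². -/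
open Matrix

lemma nonneg_of_lb (a C : ℝ) (h : ∀ κ : ℝ, C ≤ a * κ ^ 2) : 0 ≤ a := by
  by_contra hneg
  push_neg at hneg
  have hκ := h (Real.sqrt ((|C| + 1) / (-a)))
  rw [Real.sq_sqrt (div_nonneg (by positivity) (by linarith))] at hκ
  have ht : a * ((|C| + 1) / (-a)) = -(|C| + 1) := by
    rw [mul_div_assoc', div_eq_iff (by linarith : (-a) ≠ 0)]; ring
  rw [ht] at hκ
  have := neg_abs_le C
  linarith

/-- With all triplets zero and `κ' = −κ` (`κ` real) the potential equals
`2(M_φ² − μ²)κ²`, and with `κ' = κ` it equals `2(M_φ² + μ²)κ²` (all D-terms vanish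
along both directions); hence if the potential is bounded from below then `M_φ² ≥ 0`
and `|μ²| ≤ M_φ²`. -/
theorem V0_flat_directions_phi (M1sq M2sq Mpsq Mphisq musq g g' : ℝ) :
    (∀ κ : ℝ, V0 M1sq M2sq Mpsq Mphisq musq g g' 0 0 0 0 (κ : ℂ) (-(κ : ℂ))
      = 2 * (Mphisq - musq) * κ ^ 2) ∧
    (∀ κ : ℝ, V0 M1sq M2sq Mpsq Mphisq musq g g' 0 0 0 0 (κ : ℂ) (κ : ℂ)
      = 2 * (Mphisq + musq) * κ ^ 2) ∧
    ((∃ C : ℝ, ∀ (Δ Δbar Δc Δbarc : Matrix (Fin 2) (Fin 2) ℂ) (κ κ' : ℂ),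
        C ≤ V0 M1sq M2sq Mpsq Mphisq musq g g' Δ Δbar Δc Δbarc κ κ') →
      0 ≤ Mphisq ∧ |musq| ≤ Mphisq) := by
  have h1 : ∀ κ : ℝ, V0 M1sq M2sq Mpsq Mphisq musq g g' 0 0 0 0 (κ : ℂ) (-(κ : ℂ))
      = 2 * (Mphisq - musq) * κ ^ 2 := by
    intro κ
    simp [V0, pauli, PhiM, Matrix.trace_fin_two, Matrix.mul_apply, Fin.sum_univ_two,
      Fin.sum_univ_three, Matrix.conjTranspose_apply, Matrix.transpose_apply,
      Matrix.vecMul, dotProduct, Matrix.vecHead, Matrix.vecTail, Complex.sq_norm,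
      Complex.normSq]
    ring
  have h2 : ∀ κ : ℝ, V0 M1sq M2sq Mpsq Mphisq musq g g' 0 0 0 0 (κ : ℂ) (κ : ℂ)
      = 2 * (Mphisq + musq) * κ ^ 2 := by
    intro κ
    simp [V0, pauli, PhiM, Matrix.trace_fin_two, Matrix.mul_apply, Fin.sum_univ_two,
      Fin.sum_univ_three, Matrix.conjTranspose_apply, Matrix.transpose_apply,
      Matrix.vecMul, dotProduct, Matrix.vecHead, Matrix.vecTail, Complex.sq_norm,
      Complex.normSq]
    ring
  refine ⟨h1, h2, ?_⟩
  rintro ⟨C, hC⟩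
  have ha : 0 ≤ 2 * (Mphisq - musq) :=
    nonneg_of_lb _ C fun κ => (h1 κ) ▸ hC 0 0 0 0 (κ : ℂ) (-(κ : ℂ))
  have hb : 0 ≤ 2 * (Mphisq + musq) :=
    nonneg_of_lb _ C fun κ => (h2 κ) ▸ hC 0 0 0 0 (κ : ℂ) (κ : ℂ)
  refine ⟨by linarith, ?_⟩
  rw [abs_le]
  constructor <;> linarith
end

section
/- For all 2×2 complex matrices X, Y, all complex numbers κ, κ′, and all real parameters M₁², M₂², M′², M_φ², μ², g, g′, the parity-symmetric configuration (Δ = Δc = X/√2, Δbar = Δbarc = Y/√2) satisfies V₀(X/√2, Y/√2, X/√2, Y/√2, κ, κ′) ≤ V₀(0, 0, X, Y, κ, κ′), the value at the maximally parity-violating configuration (Δ = Δbar = 0, Δc = X, Δbarc = Y). Indeed all quadratic mass terms and the combination Tr(ΔΔbar) + Tr(ΔcΔbarc) are equal for the two configurations, the U(1)_{B−L} D-term vanishes for the symmetric one, and the SU(2) D-terms are no larger for the symmetric one. -/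
open Matrix

set_option linter.unnecessarySeqFocus false

lemma trace_real' {A : Matrix (Fin 2) (Fin 2) ℂ} (h : Aᴴ = A) :
    ((A.trace.re : ℂ)) = A.trace := by
  have := Matrix.trace_conjTranspose A
  rw [h] at this
  exact Complex.conj_eq_iff_re.mp this.symm

lemma pauli_herm (m : Fin 3) : (pauli m)ᴴ = pauli m := by
  fin_cases m <;> ext i j <;> fin_cases i <;> fin_cases j <;>
    simp [pauli, Matrix.conjTranspose_apply]

lemma phi_eq (κ κ' : ℂ) (m : Fin 3) :
    (PhiM κ κ' * (pauli m)ᵀ * (PhiM κ κ')ᴴ).trace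
      = ((PhiM κ κ')ᴴ * pauli m * PhiM κ κ').trace := by
  fin_cases m <;>
    simp [pauli, PhiM, Matrix.trace_fin_two, Matrix.mul_apply, Fin.sum_univ_two,
      Matrix.conjTranspose_apply, Matrix.vecMul, Matrix.vecHead, Matrix.vecTail,
      dotProduct] <;> ring

lemma sandwich_real (A : Matrix (Fin 2) (Fin 2) ℂ) (m : Fin 3) :
    (((Aᴴ * pauli m * A).trace.re : ℝ) : ℂ) = (Aᴴ * pauli m * A).trace :=
  trace_real' (by simp [Matrix.conjTranspose_mul, pauli_herm, Matrix.mul_assoc])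

lemma phi_real (κ κ' : ℂ) (m : Fin 3) :
    ((((PhiM κ κ')ᴴ * pauli m * PhiM κ κ').trace.re : ℝ) : ℂ)
      = ((PhiM κ κ')ᴴ * pauli m * PhiM κ κ').trace :=
  trace_real' (by simp [Matrix.conjTranspose_mul, pauli_herm, Matrix.mul_assoc])

lemma key_scalar (a b c : ℂ) (ha : ((a.re : ℝ) : ℂ) = a) (hb : ((b.re : ℝ) : ℂ) = b)
    (hc : ((c.re : ℝ) : ℂ) = c) :
    ‖a + b + c‖ ^ 2 + ‖a + b + c‖ ^ 2
      ≤ ‖c‖ ^ 2 + ‖2 * a + 2 * b + c‖ ^ 2 := by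
  have ha' : a.im = 0 := by rw [← ha]; simp
  have hb' : b.im = 0 := by rw [← hb]; simp
  have hc' : c.im = 0 := by rw [← hc]; simp
  simp only [Complex.sq_norm, Complex.normSq_apply, Complex.add_re, Complex.add_im,
    Complex.mul_re, Complex.mul_im, Complex.re_ofNat, Complex.im_ofNat, ha', hb', hc']
  nlinarith [sq_nonneg (a.re + b.re)]

/-- The parity-symmetric configuration `Δ = Δc = X/√2`, `Δbar = Δbarc = Y/√2` never
lies above the maximally parity-violating configuration `Δ = Δbar = 0`, `Δc = X`,
`Δbarc = Y`: for all fields and all real parameters,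
`V₀(X/√2, Y/√2, X/√2, Y/√2, κ, κ') ≤ V₀(0, 0, X, Y, κ, κ')`. -/
theorem parity_symmetric_config_not_above (M1sq M2sq Mpsq Mphisq musq g g' : ℝ)
    (X Y : Matrix (Fin 2) (Fin 2) ℂ) (κ κ' : ℂ) :
    V0 M1sq M2sq Mpsq Mphisq musq g g'
      (((Real.sqrt 2 : ℂ))⁻¹ • X) (((Real.sqrt 2 : ℂ))⁻¹ • Y)
      (((Real.sqrt 2 : ℂ))⁻¹ • X) (((Real.sqrt 2 : ℂ))⁻¹ • Y) κ κ'
    ≤ V0 M1sq M2sq Mpsq Mphisq musq g g' 0 0 X Y κ κ' := by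
  set s : ℂ := ((Real.sqrt 2 : ℂ))⁻¹ with hs_def
  have hconj : star s = s := by
    simp [hs_def, map_inv₀, Complex.conj_ofReal]
  have hss : s * s = 2⁻¹ := by
    rw [hs_def, ← mul_inv, ← Complex.ofReal_mul, Real.mul_self_sqrt (by norm_num)]
    norm_num
  have sand : ∀ (A B C : Matrix (Fin 2) (Fin 2) ℂ),
      (s • A)ᴴ * B * (s • C) = (2⁻¹:ℂ) • (Aᴴ * B * C) := by
    intro A B C
    rw [conjTranspose_smul, hconj, Matrix.smul_mul, Matrix.smul_mul, Matrix.mul_smul,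
      smul_smul, hss]
  have sand2 : ∀ (A C : Matrix (Fin 2) (Fin 2) ℂ),
      (s • A)ᴴ * (s • C) = (2⁻¹:ℂ) • (Aᴴ * C) := by
    intro A C
    rw [conjTranspose_smul, hconj, Matrix.smul_mul, Matrix.mul_smul, smul_smul, hss]
  have sand3 : ∀ (A C : Matrix (Fin 2) (Fin 2) ℂ),
      (s • A) * (s • C) = (2⁻¹:ℂ) • (A * C) := by
    intro A C
    rw [Matrix.smul_mul, Matrix.mul_smul, smul_smul, hss]
  simp only [V0, sand, sand2, sand3, smul_smul, trace_smul, smul_eq_mul,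
    conjTranspose_zero, Matrix.zero_mul, Matrix.mul_zero, trace_zero, smul_zero,
    Matrix.smul_mul]
  norm_num
  simp only [phi_eq]
  have main :
      (∑ m : Fin 3, ‖(Xᴴ * pauli m * X).trace + (Yᴴ * pauli m * Y).trace
          + ((PhiM κ κ')ᴴ * pauli m * PhiM κ κ').trace‖ ^ 2)
        + (∑ m : Fin 3, ‖(Xᴴ * pauli m * X).trace + (Yᴴ * pauli m * Y).trace
          + ((PhiM κ κ')ᴴ * pauli m * PhiM κ κ').trace‖ ^ 2)
      ≤ (∑ m : Fin 3, ‖((PhiM κ κ')ᴴ * pauli m * PhiM κ κ').trace‖ ^ 2)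
        + (∑ m : Fin 3, ‖2 * (Xᴴ * pauli m * X).trace
          + 2 * (Yᴴ * pauli m * Y).trace
          + ((PhiM κ κ')ᴴ * pauli m * PhiM κ κ').trace‖ ^ 2) := by
    rw [← Finset.sum_add_distrib, ← Finset.sum_add_distrib]
    apply Finset.sum_le_sum
    intro m _
    exact key_scalar _ _ _ (sandwich_real X m) (sandwich_real Y m) (phi_real κ κ' m)
  have main2 := mul_le_mul_of_nonneg_left main (show (0:ℝ) ≤ g ^ 2 / 8 by positivity)
  have hB : (0:ℝ) ≤ g' ^ 2 / 8 * (2 * ‖-(Xᴴ * X).trace + (Yᴴ * Y).trace‖) ^ 2 := by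
    positivity
  nlinarith [main2, hB]
end
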